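/- Let μ, ν, κ be probability measures on ℝ such that their convolutions satisfy μ ∗ κ = ν ∗ κ (MeasureTheory.Measure.conv), and such that the characteristic function of κ is nonzero Lebesgue-almost everywhere, i.e. charFun κ t ≠ 0 for volume-a.e. t ∈ ℝ. Then μ = ν. -/

import Mathlib

open MeasureTheory Complex
open scoped MeasureTheory FourierTransform Real

/-- The characteristic function of a measure `κ` on `ℝ`:
`_root_.charFun κ t := ∫ x, exp (i · t · x) ∂κ`. -/
noncomputable def _root_.charFun (κ : Measure ℝ) (t : ℝ) : ℂ :=
  ∫ x, Complex.exp (Complex.I * t * x) ∂κ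

lemma norm_char (t x : ℝ) : ‖Complex.exp (Complex.I * t * x)‖ = 1 := by
  simp [Complex.norm_exp]

lemma continuous_char (t : ℝ) : Continuous fun x : ℝ => Complex.exp (Complex.I * t * x) := by
  fun_prop

lemma integrable_char (μ : Measure ℝ) [IsFiniteMeasure μ] (t : ℝ) :
    Integrable (fun x : ℝ => Complex.exp (Complex.I * t * x)) μ := by
  refine Integrable.mono' (integrable_const 1) ((continuous_char t).aestronglyMeasurable) ?_
  filter_upwards with x
  rw [norm_char]

lemma charFun_conv (μ κ : Measure ℝ) [IsProbabilityMeasure μ] [IsProbabilityMeasure κ] (t : ℝ) :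
    _root_.charFun (Measure.conv μ κ) t = _root_.charFun μ t * _root_.charFun κ t := by
  unfold _root_.charFun Measure.conv
  rw [integral_map (by fun_prop) ((continuous_char t).aestronglyMeasurable)]
  have : ∀ p : ℝ × ℝ, Complex.exp (Complex.I * t * ↑(p.1 + p.2))
      = Complex.exp (Complex.I * t * p.1) * Complex.exp (Complex.I * t * p.2) := by
    intro p
    rw [← Complex.exp_add]
    push_cast
    ring_nf
  simp_rw [this]
  exact integral_prod_mul (fun x : ℝ => Complex.exp (Complex.I * t * x)) (fun x : ℝ => Complex.exp (Complex.I * t * x))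

lemma charFun_continuous (μ : Measure ℝ) [IsFiniteMeasure μ] : Continuous (_root_.charFun μ) := by
  show Continuous fun t : ℝ => ∫ x, Complex.exp (Complex.I * t * x) ∂μ
  refine continuous_of_dominated (bound := fun _ => 1)
    (fun t => (continuous_char t).aestronglyMeasurable) ?_ (integrable_const 1) ?_
  · intro t
    filter_upwards with x
    rw [norm_char]
  · filter_upwards with x
    fun_prop

/-- A smooth compactly supported function is a Schwartz map. -/
noncomputable def toSchwartz (f : ℝ → ℂ) (h1 : ContDiff ℝ ((⊤ : ℕ∞) : WithTop ℕ∞) f) (h2 : HasCompactSupport f) :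
    SchwartzMap ℝ ℂ where
  toFun := f
  smooth' := h1
  decay' := by
    intro k n
    have hs : HasCompactSupport fun x => ‖x‖ ^ k * ‖iteratedFDeriv ℝ n f x‖ := by
      apply HasCompactSupport.mul_left
      exact (h2.iteratedFDeriv n).norm
    have hc : Continuous fun x : ℝ => ‖x‖ ^ k * ‖iteratedFDeriv ℝ n f x‖ := by
      exact (continuous_norm.pow k).mul (h1.continuous_iteratedFDeriv (by exact_mod_cast le_top)).norm
    obtain ⟨x₀, hx₀⟩ := hc.exists_forall_ge_of_hasCompactSupport hs
    exact ⟨_, hx₀⟩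

open scoped FourierTransform in
lemma integral_schwartz_eq (μ : Measure ℝ) [IsProbabilityMeasure μ] (f : SchwartzMap ℝ ℂ) :
    ∫ x, f x ∂μ = ∫ t : ℝ, _root_.charFun μ (2 * Real.pi * t) • 𝓕 (⇑f) t := by
  have hcoe : ⇑(SchwartzMap.fourierTransformCLM ℂ f) = 𝓕 (⇑f) := by
    rw [SchwartzMap.fourierTransformCLM_apply, SchwartzMap.fourier_coe]
  have hf𝓕 : Integrable (𝓕 ⇑f) volume := by
    rw [← hcoe]; exact (SchwartzMap.fourierTransformCLM ℂ f).integrable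
  have hcont𝓕 : Continuous (𝓕 ⇑f) := by
    rw [← hcoe]; exact (SchwartzMap.fourierTransformCLM ℂ f).continuous
  have hinv : ∀ x : ℝ, f x = ∫ t : ℝ, Complex.exp (Complex.I * (2 * Real.pi * t) * x) • 𝓕 (⇑f) t := by
    intro x
    conv_lhs => rw [← f.continuous.fourierInv_fourier_eq f.integrable hf𝓕]
    rw [Real.fourierInv_eq']
    congr 1
    ext t
    congr 2
    simp only [RCLike.inner_apply, starRingEnd_apply, star_trivial]
    push_cast
    ring
  have hInt : Integrable (Function.uncurry fun (x t : ℝ) =>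
      Complex.exp (Complex.I * (2 * Real.pi * t) * x) • 𝓕 (⇑f) t) (μ.prod volume) := by
    have hmeas : AEStronglyMeasurable (Function.uncurry fun (x t : ℝ) =>
        Complex.exp (Complex.I * (2 * Real.pi * t) * x) • 𝓕 (⇑f) t) (μ.prod volume) := by
      apply Continuous.aestronglyMeasurable
      show Continuous fun p : ℝ × ℝ => Complex.exp (Complex.I * (2 * Real.pi * p.2) * p.1) • 𝓕 (⇑f) p.2
      apply Continuous.smul (f := fun p : ℝ × ℝ => Complex.exp (Complex.I * (2 * Real.pi * p.2) * p.1)) (g := fun p : ℝ × ℝ => 𝓕 (⇑f) p.2)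
      · fun_prop
      · exact hcont𝓕.comp continuous_snd
    refine Integrable.mono' (g := fun p : ℝ × ℝ => ‖𝓕 (⇑f) p.2‖) ?_ hmeas ?_
    · -- bound : (x, t) ↦ ‖𝓕 f t‖ integrable on μ.prod volume
      refine (integrable_prod_iff ?_).2 ⟨?_, ?_⟩
      · exact (hcont𝓕.norm.comp continuous_snd).aestronglyMeasurable
      · exact Filter.Eventually.of_forall fun x => hf𝓕.norm
      · simpa using integrable_const (μ := μ) (∫ t : ℝ, ‖𝓕 (⇑f) t‖)
    · filter_upwards with p
      rw [Function.uncurry]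
      rw [norm_smul]
      have : Complex.I * (2 * (Real.pi : ℂ) * (p.2 : ℂ)) * (p.1 : ℂ)
          = Complex.I * ((2 * Real.pi * p.2 : ℝ) : ℂ) * ((p.1 : ℝ) : ℂ) := by push_cast; ring
      rw [this, norm_char]
      simp
  calc ∫ x, f x ∂μ
      = ∫ x, ∫ t : ℝ, Complex.exp (Complex.I * (2 * Real.pi * t) * x) • 𝓕 (⇑f) t ∂volume ∂μ := by
        exact integral_congr_ae (Filter.Eventually.of_forall hinv)
    _ = ∫ t : ℝ, ∫ x, Complex.exp (Complex.I * (2 * Real.pi * t) * x) • 𝓕 (⇑f) t ∂μ ∂volume :=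
        integral_integral_swap hInt
    _ = ∫ t : ℝ, _root_.charFun μ (2 * Real.pi * t) • 𝓕 (⇑f) t ∂volume := by
        congr 1
        ext t
        rw [integral_smul_const]
        congr 1
        unfold _root_.charFun
        apply integral_congr_ae
        filter_upwards with x
        congr 1
        push_cast
        ring

/-- The bump function approximating the indicator of `Iic a`. -/
noncomputable def bumpSeq (a : ℝ) (n : ℕ) : ContDiffBump (a - (n + 1) : ℝ) where
  rIn := n + 1
  rOut := (n + 1) + ((n : ℝ) + 1)⁻¹
  rIn_pos := by positivity
  rIn_lt_rOut := lt_add_of_pos_right _ (by positivity)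

lemma bumpSeq_tendsto (a x : ℝ) :
    Filter.Tendsto (fun n : ℕ => bumpSeq a n x) Filter.atTop
      (nhds (Set.indicator (Set.Iic a) (1 : ℝ → ℝ) x)) := by
  rcases le_or_gt x a with hx | hx
  · rw [Set.indicator_of_mem (Set.mem_Iic.mpr hx)]
    refine Filter.Tendsto.congr' ?_ tendsto_const_nhds
    obtain ⟨N, hN⟩ := exists_nat_ge (a - x)
    rw [Filter.EventuallyEq, Filter.eventually_atTop]
    refine ⟨N, fun n hn => ?_⟩
    symm
    apply (bumpSeq a n).one_of_mem_closedBall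
    rw [Metric.mem_closedBall, Real.dist_eq, abs_le]
    have h1 : a - x ≤ (n : ℝ) := hN.trans (by exact_mod_cast hn)
    constructor <;> [skip; skip] <;> simp only [bumpSeq] <;> linarith
  · rw [Set.indicator_of_notMem (by simpa using hx)]
    refine Filter.Tendsto.congr' ?_ tendsto_const_nhds
    obtain ⟨N, hN⟩ := exists_nat_ge (x - a)⁻¹
    rw [Filter.EventuallyEq, Filter.eventually_atTop]
    refine ⟨N, fun n hn => ?_⟩
    symm
    apply (bumpSeq a n).zero_of_le_dist
    rw [Real.dist_eq]
    have hxa : 0 < x - a := by linarith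
    have hNn : (N : ℝ) ≤ (n : ℝ) := Nat.cast_le.mpr hn
    have h1 : (x - a)⁻¹ ≤ (n : ℝ) + 1 := hN.trans (by linarith)
    have h2 : ((n : ℝ) + 1)⁻¹ ≤ x - a := inv_le_of_inv_le₀ hxa h1
    have habs : |x - (a - ((n : ℝ) + 1))| = x - a + ((n : ℝ) + 1) := by
      rw [abs_of_pos] <;> [ring; linarith]
    simp only [bumpSeq]
    push_cast
    rw [habs]
    linarith

set_option maxHeartbeats 1000000 in
lemma ext_of_charFun (μ ν : Measure ℝ) [IsProbabilityMeasure μ] [IsProbabilityMeasure ν]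
    (h : _root_.charFun μ = _root_.charFun ν) : μ = ν := by
  have key : ∀ f : SchwartzMap ℝ ℂ, ∫ x, f x ∂μ = ∫ x, f x ∂ν := fun f => by
    rw [integral_schwartz_eq, integral_schwartz_eq, h]
  refine MeasureTheory.Measure.ext_of_Iic μ ν fun a => ?_
  have hcd : ∀ n : ℕ, ContDiff ℝ ((⊤ : ℕ∞) : WithTop ℕ∞) (fun x : ℝ => ((bumpSeq a n x : ℝ) : ℂ)) :=
    fun n => Complex.ofRealCLM.contDiff.comp (bumpSeq a n).contDiff
  have hcs : ∀ n : ℕ, HasCompactSupport (fun x : ℝ => ((bumpSeq a n x : ℝ) : ℂ)) :=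
    fun n => ((bumpSeq a n).hasCompactSupport).comp_left (g := Complex.ofReal) Complex.ofReal_zero
  have hint : ∀ (ρ : Measure ℝ) [IsProbabilityMeasure ρ],
      Filter.Tendsto (fun n => ∫ x, (bumpSeq a n) x ∂ρ) Filter.atTop
        (nhds ((ρ (Set.Iic a)).toReal)) := by
    intro ρ _
    have := MeasureTheory.tendsto_integral_of_dominated_convergence (μ := ρ)
      (F := fun (n : ℕ) (x : ℝ) => (bumpSeq a n) x)
      (f := Set.indicator (Set.Iic a) (1 : ℝ → ℝ))
      (bound := fun _ => 1)
      (fun n => ((bumpSeq a n).continuous).aestronglyMeasurable)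
      (integrable_const 1)
      (fun n => Filter.Eventually.of_forall fun x => by
        rw [Real.norm_eq_abs, _root_.abs_of_nonneg (bumpSeq a n).nonneg]; exact (bumpSeq a n).le_one)
      (Filter.Eventually.of_forall fun x => bumpSeq_tendsto a x)
    rwa [integral_indicator_one measurableSet_Iic] at this
  have heq : ∀ n : ℕ, ∫ x, (bumpSeq a n) x ∂μ = ∫ x, (bumpSeq a n) x ∂ν := by
    intro n
    have h1 : ∫ x, ((bumpSeq a n x : ℝ) : ℂ) ∂μ = ∫ x, ((bumpSeq a n x : ℝ) : ℂ) ∂ν :=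
      key (toSchwartz _ (hcd n) (hcs n))
    have h1' : ∫ x, (RCLike.ofReal (K := ℂ) ((bumpSeq a n) x)) ∂μ
        = ∫ x, (RCLike.ofReal (K := ℂ) ((bumpSeq a n) x)) ∂ν := h1
    rw [integral_ofReal, integral_ofReal] at h1'
    exact_mod_cast h1'
  have hμν := (hint μ).congr heq
  have := tendsto_nhds_unique hμν (hint ν)
  exact (ENNReal.toReal_eq_toReal_iff' (measure_ne_top μ _) (measure_ne_top ν _)).mp this

/-- Measure-level deconvolution: if probability measures `μ` and `ν` on `ℝ` have equal
convolutions with a probability measure `κ` whose characteristic function is nonzero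
Lebesgue-almost everywhere, then `μ = ν`. -/
theorem measure_eq_of_conv_eq_of_charFun_ae_ne_zero
    (μ ν κ : Measure ℝ)
    [IsProbabilityMeasure μ] [IsProbabilityMeasure ν] [IsProbabilityMeasure κ]
    (hconv : Measure.conv μ κ = Measure.conv ν κ)
    (hchar : ∀ᵐ t : ℝ ∂volume, _root_.charFun κ t ≠ 0) :
    μ = ν := by
  have hc : ∀ t, _root_.charFun μ t * _root_.charFun κ t = _root_.charFun ν t * _root_.charFun κ t := by
    intro t
    rw [← charFun_conv μ κ t, ← charFun_conv ν κ t, hconv]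
  have hae : _root_.charFun μ =ᵐ[volume] _root_.charFun ν := by
    filter_upwards [hchar] with t ht
    exact mul_right_cancel₀ ht (hc t)
  have heq : _root_.charFun μ = _root_.charFun ν :=
    ((charFun_continuous μ).ae_eq_iff_eq volume (charFun_continuous ν)).mp hae
  exact ext_of_charFun μ ν heq
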